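/- For any ζ ∈ [0, 2], n₁ ∈ ℕ and w₁ ∈ [0, 1], KL( P̄_{n₀,n₁}(ζ, w₁, 0), P̄_{n₀,n₁}(ζ, w₁, 1) ) ≤ n₁ (1 − w₁) ζ²/20. -/

import Mathlib

open MeasureTheory
open scoped ENNReal

instance {α : Type*} [MeasurableSpace α] : MeasurableSpace (Option α) :=
  MeasurableSpace.comap (Equiv.optionEquivSumPUnit.{0} α) inferInstance

/-- The density `f_ζ(y) = ζ e^{ζy}/(e^ζ − 1)` on `[0,1]` (for `ζ > 0`), with `f₀` the
uniform density on `[0,1]`. -/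
noncomputable def fdens (ζ y : ℝ) : ℝ :=
  if y ∈ Set.Icc (0 : ℝ) 1 then
    (if ζ = 0 then 1 else ζ * Real.exp (ζ * y) / (Real.exp ζ - 1))
  else 0

/-- The Kullback–Leibler divergence `KL(μ, ν) = ∫ log(dμ/dν) dμ`. -/
noncomputable def klDivR {α : Type*} [MeasurableSpace α] (μ ν : Measure α) : ℝ :=
  ∫ x, Real.log ((μ.rnDeriv ν x).toReal) ∂μ

/-- The box `A_d = [0, 1/√2] × [0, 1/√(2(d−1))]^{d−1}`. -/
noncomputable def Aset (d : ℕ) : Set (Fin d → ℝ) :=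
  Set.univ.pi fun j : Fin d =>
    Set.Icc 0 (if (j : ℕ) = 0 then (Real.sqrt 2)⁻¹ else (Real.sqrt (2 * ((d : ℝ) - 1)))⁻¹)

/-- `P₀`: the uniform distribution on `A_d`. -/
noncomputable def Pzero (d : ℕ) : Measure (Fin d → ℝ) :=
  (volume (Aset d))⁻¹ • volume.restrict (Aset d)

/-- The normalising constant `C_d = √(2^d (d−1)^{d−1})`. -/
noncomputable def Cd (d : ℕ) : ℝ := Real.sqrt (2 ^ d * ((d : ℝ) - 1) ^ (d - 1))

/-- The law of `Z¹`, with density `(z_j)_j ↦ C_d · f_{τζ}(√2 z₁)` on `A_d`. -/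
noncomputable def Qone (d : ℕ) (hd : 0 < d) (ζ τ : ℝ) : Measure (Fin d → ℝ) :=
  (volume.restrict (Aset d)).withDensity fun z =>
    ENNReal.ofReal (Cd d * fdens (τ * ζ) (Real.sqrt 2 * z ⟨0, hd⟩))

/-- `P₁(ζ, w₁, τ)`: the law on `𝒳 = A_d ∪ {∅}` of the corrupted observation `X¹`, which
equals `∅` with probability `w₁` independently of `Z¹`, and `Z¹` otherwise. -/
noncomputable def Pone (d : ℕ) (hd : 0 < d) (ζ w₁ τ : ℝ) :
    Measure (Option (Fin d → ℝ)) :=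
  ENNReal.ofReal (1 - w₁) • ((Qone d hd ζ τ).map Option.some)
    + ENNReal.ofReal w₁ • Measure.dirac (none : Option (Fin d → ℝ))

/-- `P̄_{n₀,n₁}(ζ, w₁, τ) = P₀^{n₀} ⊗ P₁(ζ, w₁, τ)^{n₁}`: the joint law of the two
samples `D'₀ ∼ P₀^{n₀}` (with `X⁰ = Z⁰`) and `D'₁ ∼ P₁(ζ, w₁, τ)^{n₁}`. -/
noncomputable def Pbar (d : ℕ) (hd : 0 < d) (n₀ n₁ : ℕ) (ζ w₁ τ : ℝ) :
    Measure ((Fin n₀ → Option (Fin d → ℝ)) × (Fin n₁ → Option (Fin d → ℝ))) :=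
  (Measure.pi fun _ : Fin n₀ => (Pzero d).map Option.some).prod
    (Measure.pi fun _ : Fin n₁ => Pone d hd ζ w₁ τ)


section AUX
section OptionAux
variable {α : Type*} [MeasurableSpace α]

lemma measurable_optionEquiv :
    Measurable (Equiv.optionEquivSumPUnit.{0} α) :=
  Measurable.of_comap_le le_rfl

lemma measurable_optionEquiv_symm :
    Measurable (Equiv.optionEquivSumPUnit.{0} α).symm := by
  rintro S ⟨T, hT, rfl⟩
  simpa [Set.preimage_preimage] using hT

lemma measurable_some' : Measurable (Option.some : α → Option α) := by
  have : (Option.some : α → Option α)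
      = (Equiv.optionEquivSumPUnit.{0} α).symm ∘ Sum.inl := by
    funext x; rfl
  rw [this]
  exact measurable_optionEquiv_symm.comp measurable_inl

lemma measurable_option_elim {β : Type*} [MeasurableSpace β] {f : α → β} (hf : Measurable f)
    (b : β) : Measurable (fun x : Option α => x.elim b f) := by
  have : (fun x : Option α => x.elim b f)
      = (Sum.elim f (fun _ => b)) ∘ (Equiv.optionEquivSumPUnit.{0} α) := by
    funext x; cases x <;> rfl
  rw [this]
  exact (hf.sumElim measurable_const).comp measurable_optionEquiv

end OptionAux

section WDAux
variable {α β : Type*} [MeasurableSpace α] [MeasurableSpace β]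

lemma withDensity_map' (μ : Measure α) {f : α → β} (hf : Measurable f) {g : β → ℝ≥0∞}
    (hg : Measurable g) :
    (μ.map f).withDensity g = (μ.withDensity (g ∘ f)).map f := by
  ext s hs
  rw [withDensity_apply _ hs, Measure.map_apply hf hs,
    withDensity_apply _ (hf hs), setLIntegral_map hs hg hf]
  rfl

lemma withDensity_dirac' (a : α) {g : α → ℝ≥0∞} (hg : Measurable g) :
    (Measure.dirac a).withDensity g = g a • Measure.dirac a := by
  ext s hs
  classical
  rw [withDensity_apply _ hs, setLIntegral_dirac' hg hs, Measure.smul_apply,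
    Measure.dirac_apply' _ hs]
  by_cases h : a ∈ s <;> simp [h]

lemma prod_withDensity' (μ : Measure α) (ν : Measure β) [SigmaFinite μ] [SigmaFinite ν]
    {f : α → ℝ≥0∞} {g : β → ℝ≥0∞} (hf : Measurable f) (hg : Measurable g)
    (hf' : ∀ x, f x ≠ ⊤) (hg' : ∀ x, g x ≠ ⊤) :
    (μ.withDensity f).prod (ν.withDensity g)
      = (μ.prod ν).withDensity (fun p => f p.1 * g p.2) := by
  haveI : SigmaFinite (μ.withDensity f) := SigmaFinite.withDensity_of_ne_top' hf'
  haveI : SigmaFinite (ν.withDensity g) := SigmaFinite.withDensity_of_ne_top' hg'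
  refine Measure.prod_eq (fun s t hs ht => ?_)
  rw [withDensity_apply _ (hs.prod ht), ← Measure.prod_restrict,
    lintegral_prod_mul hf.aemeasurable hg.aemeasurable,
    withDensity_apply _ hs, withDensity_apply _ ht]
end WDAux

lemma map_withDensity_equiv {α β : Type*} [MeasurableSpace α] [MeasurableSpace β]
    (μ : Measure α) (e : α ≃ᵐ β) {H : α → ℝ≥0∞} (hH : Measurable H) :
    (μ.withDensity H).map e = (μ.map e).withDensity (H ∘ e.symm) := by
  rw [withDensity_map' _ e.measurable (hH.comp e.symm.measurable)]
  congr 1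
  apply withDensity_congr_ae
  filter_upwards with x
  simp [Function.comp]

section PiAux
variable {α : Type*} [MeasurableSpace α]

lemma pi_withDensity' (n : ℕ) (ν : Measure α) [SigmaFinite ν] {g : α → ℝ≥0∞}
    (hg : Measurable g) (hg' : ∀ x, g x ≠ ⊤) :
    Measure.pi (fun _ : Fin n => ν.withDensity g)
      = (Measure.pi fun _ : Fin n => ν).withDensity (fun y => ∏ i, g (y i)) := by
  haveI : SigmaFinite (ν.withDensity g) := SigmaFinite.withDensity_of_ne_top' hg'
  induction n with
  | zero =>
      have h1 : (fun y : Fin 0 → α => ∏ i, g (y i)) = fun _ => 1 := by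
        funext y; simp
      rw [h1, withDensity_const, one_smul]
      refine Measure.pi_eq (fun s hs => ?_)
      simp [Measure.pi_pi]
  | succ n ih =>
      have hgP : Measurable (fun y : Fin n → α => ∏ i, g (y i)) :=
        Finset.measurable_prod _ (fun i _ => hg.comp (measurable_pi_apply i))
      have hgP' : ∀ y : Fin n → α, (∏ i, g (y i)) ≠ ⊤ := fun y =>
        ENNReal.prod_ne_top (fun i _ => hg' (y i))
      have hH : Measurable (fun p : α × (Fin n → α) => g p.1 * ∏ i, g (p.2 i)) :=
        (hg.comp measurable_fst).mul (hgP.comp measurable_snd)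
      have h0 := measurePreserving_piFinSuccAbove (fun _ : Fin (n + 1) => ν.withDensity g) 0
      have h1 := measurePreserving_piFinSuccAbove (fun _ : Fin (n + 1) => ν) 0
      have key : Measure.pi (fun _ : Fin (n+1) => ν.withDensity g)
          = Measure.map (MeasurableEquiv.piFinSuccAbove (fun _ : Fin (n+1) => α) 0).symm
            ((ν.withDensity g).prod (Measure.pi fun _ : Fin n => ν.withDensity g)) :=
        (h0.symm (MeasurableEquiv.piFinSuccAbove (fun _ : Fin (n+1) => α) 0)).map_eq.symm
      rw [key, ih, prod_withDensity' ν (Measure.pi fun _ : Fin n => ν) hg hgP hg' hgP',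
        map_withDensity_equiv _ (MeasurableEquiv.piFinSuccAbove (fun _ : Fin (n+1) => α) 0).symm hH,
        MeasurableEquiv.symm_symm,
        (h1.symm (MeasurableEquiv.piFinSuccAbove (fun _ : Fin (n+1) => α) 0)).map_eq]
      congr 1
      funext y
      simp only [Function.comp]
      rw [Fin.prod_univ_succAbove (fun i => g (y i)) 0]
      rfl

lemma pi_map_eval' {n : ℕ} (ν : Measure α) [IsProbabilityMeasure ν] (i : Fin n) :
    (Measure.pi fun _ : Fin n => ν).map (fun y => y i) = ν := by
  ext s hs
  rw [Measure.map_apply (measurable_pi_apply i) hs]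
  have : (fun y : Fin n → α => y i) ⁻¹' s
      = Set.univ.pi (Function.update (fun _ : Fin n => (Set.univ : Set α)) i s) :=
    Set.eval_preimage
  rw [this, Measure.pi_pi, Fintype.prod_eq_single i
    (fun j hj => by rw [Function.update_of_ne hj]; exact measure_univ)]
  rw [Function.update_self]
end PiAux

lemma exp_diff_bound {u : ℝ} (hu0 : 0 ≤ u) (hu1 : u ≤ 1) :
    Real.exp u - Real.exp (-u) ≤ 2*u + 2*u^3/5 := by
  have hb1 := Real.exp_bound (x := u) (by rw [abs_of_nonneg hu0]; exact hu1) (n := 5) (by norm_num)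
  have hb2 := Real.exp_bound (x := -u) (by rw [abs_neg, abs_of_nonneg hu0]; exact hu1) (n := 5)
    (by norm_num)
  rw [abs_of_nonneg hu0] at hb1
  rw [abs_neg, abs_of_nonneg hu0] at hb2
  simp only [Finset.sum_range_succ, Finset.sum_range_zero, Nat.factorial] at hb1 hb2
  norm_num at hb1 hb2
  have h1 := (abs_le.1 hb1).2
  have h2 := (abs_le.1 hb2).1
  nlinarith [pow_le_pow_of_le_one hu0 hu1 (show 3 ≤ 5 by norm_num)]

lemma scalar_ineq {ζ : ℝ} (h0 : 0 < ζ) (h2 : ζ ≤ 2) :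
    Real.log ((Real.exp ζ - 1)/ζ) - ζ/2 ≤ ζ^2/20 := by
  have hu0 : (0:ℝ) ≤ ζ/2 := by linarith
  have hu1 : ζ/2 ≤ 1 := by linarith
  have hd := exp_diff_bound hu0 hu1
  have hee : Real.exp (ζ/2) * Real.exp (-(ζ/2)) = 1 := by
    rw [← Real.exp_add]; norm_num
  have hee2 : Real.exp (ζ/2) * Real.exp (ζ/2) = Real.exp ζ := by
    rw [← Real.exp_add]; ring_nf
  have hkey : (Real.exp ζ - 1)/ζ ≤ Real.exp (ζ/2) * (1 + ζ^2/20) := by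
    rw [div_le_iff₀ h0]
    have := mul_le_mul_of_nonneg_left hd (Real.exp_nonneg (ζ/2))
    nlinarith [Real.exp_pos (ζ/2)]
  have hpos : 0 < (Real.exp ζ - 1)/ζ := by
    apply div_pos _ h0
    have : (1:ℝ) < Real.exp ζ := by
      rw [← Real.exp_zero]; exact Real.exp_lt_exp.2 h0
    linarith
  have hlog := Real.log_le_log hpos hkey
  rw [Real.log_mul (Real.exp_ne_zero _) (by positivity), Real.log_exp] at hlog
  have hlog2 : Real.log (1 + ζ^2/20) ≤ ζ^2/20 := by
    have := Real.log_le_sub_one_of_pos (x := 1 + ζ^2/20) (by positivity)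
    linarith
  linarith

lemma Aset_meas (d : ℕ) : MeasurableSet (Aset d) :=
  MeasurableSet.univ_pi (fun j => measurableSet_Icc)

lemma bpos {n : ℕ} (hn : 0 < n) : 0 < (Real.sqrt (2 * (n:ℝ)))⁻¹ := by
  have : (0:ℝ) < 2 * n := by positivity
  positivity

lemma mem_Aset_bound {d : ℕ} (hd : 0 < d) {z : Fin d → ℝ} (hz : z ∈ Aset d) :
    z ⟨0, hd⟩ ∈ Set.Icc (0:ℝ) (Real.sqrt 2)⁻¹ := by
  have := hz ⟨0, hd⟩ (Set.mem_univ _)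
  simpa using this

lemma sqrt2_mul_mem {t : ℝ} (ht : t ∈ Set.Icc (0:ℝ) (Real.sqrt 2)⁻¹) :
    Real.sqrt 2 * t ∈ Set.Icc (0:ℝ) 1 := by
  have h2 : (0:ℝ) < Real.sqrt 2 := Real.sqrt_pos.2 (by norm_num)
  constructor
  · exact mul_nonneg h2.le ht.1
  · calc Real.sqrt 2 * t ≤ Real.sqrt 2 * (Real.sqrt 2)⁻¹ :=
        mul_le_mul_of_nonneg_left ht.2 h2.le
    _ = 1 := mul_inv_cancel₀ h2.ne'

lemma volume_Aset (d : ℕ) (hd : 0 < d) :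
    volume (Aset d) = ENNReal.ofReal
      ((Real.sqrt 2)⁻¹ * ((Real.sqrt (2 * ((d : ℝ) - 1)))⁻¹) ^ (d - 1)) := by
  obtain ⟨n, rfl⟩ : ∃ n, d = n + 1 := ⟨d - 1, (Nat.succ_pred_eq_of_pos hd).symm⟩
  set b : ℝ := (Real.sqrt (2 * (((n:ℝ) + 1) - 1)))⁻¹ with hb
  have hbn : 0 ≤ b := by positivity
  rw [Aset, volume_pi_pi]
  have : ∀ i : Fin (n+1), volume (Set.Icc (0:ℝ)
      (if (i : ℕ) = 0 then (Real.sqrt 2)⁻¹ else (Real.sqrt (2 * (((n+1 : ℕ) : ℝ) - 1)))⁻¹))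
      = ENNReal.ofReal (if (i : ℕ) = 0 then (Real.sqrt 2)⁻¹ else b) := by
    intro i
    rw [Real.volume_Icc]
    congr 1
    push_cast
    split <;> simp [hb]
  simp_rw [this]
  rw [Fin.prod_univ_succ]
  simp only [Fin.val_zero, if_true, Fin.val_succ, Nat.succ_ne_zero, if_false]
  rw [Finset.prod_const, Finset.card_univ, Fintype.card_fin,
    ← ENNReal.ofReal_pow hbn, ← ENNReal.ofReal_mul (by positivity)]
  have hcast : (((n+1 : ℕ):ℝ) - 1) = ((n:ℝ) + 1 - 1) := by push_cast; ring
  simp [hb, hcast]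

lemma Cd_nonneg (d : ℕ) : 0 ≤ Cd d := Real.sqrt_nonneg _

lemma Cd_mul_vol (d : ℕ) (hd : 0 < d) :
    Cd d * ((Real.sqrt 2)⁻¹ * ((Real.sqrt (2 * ((d : ℝ) - 1)))⁻¹) ^ (d - 1)) = 1 := by
  obtain ⟨n, rfl⟩ : ∃ n, d = n + 1 := ⟨d - 1, (Nat.succ_pred_eq_of_pos hd).symm⟩
  have hcast : (((n+1 : ℕ):ℝ) - 1) = (n:ℝ) := by push_cast; ring
  set x : ℝ := Cd (n+1) * ((Real.sqrt 2)⁻¹ * ((Real.sqrt (2 * (((n+1:ℕ) : ℝ) - 1)))⁻¹) ^ (n + 1 - 1)) with hx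
  have hxnn : 0 ≤ x := by
    rw [hx]
    have := Cd_nonneg (n+1)
    positivity
  have hsq : x ^ 2 = 1 := by
    have h2 : (0:ℝ) ≤ 2 ^ (n+1) * (n:ℝ) ^ n := by positivity
    have hs2 : (0:ℝ) ≤ 2 := by norm_num
    have h2n : (0:ℝ) ≤ 2 * n := by positivity
    have hC2 : Cd (n+1) ^ 2 = 2 ^ (n+1) * (n:ℝ) ^ n := by
      rw [Cd, hcast]
      simp only [Nat.add_sub_cancel]
      exact Real.sq_sqrt h2
    have ha2 : ((Real.sqrt 2)⁻¹) ^ 2 = 2⁻¹ := by rw [inv_pow, Real.sq_sqrt hs2]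
    have hb2 : ((Real.sqrt (2 * (n:ℝ)))⁻¹) ^ 2 = (2 * (n:ℝ))⁻¹ := by
      rw [inv_pow, Real.sq_sqrt h2n]
    have expand : x ^ 2 = Cd (n+1) ^ 2
        * (((Real.sqrt 2)⁻¹) ^ 2 * ((((Real.sqrt (2 * (n:ℝ)))⁻¹) ^ 2) ^ n)) := by
      rw [hx, hcast]
      simp only [Nat.add_sub_cancel]
      ring
    rw [expand, hC2, ha2, hb2]
    rcases Nat.eq_zero_or_pos n with hn | hn
    · subst hn; norm_num
    · have hne : (2 * (n:ℝ)) ≠ 0 := by positivity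
      rw [pow_succ]
      field_simp
      rw [← mul_pow, ← mul_pow, one_div, mul_inv_cancel₀ hne]
      ring
  nlinarith [hxnn, hsq]

lemma integral_Icc_id {A : ℝ} (hA : 0 ≤ A) : ∫ t in Set.Icc (0:ℝ) A, t = A ^ 2 / 2 := by
  rw [MeasureTheory.integral_Icc_eq_integral_Ioc,
    ← intervalIntegral.integral_of_le hA, integral_id]
  ring

lemma integral_Aset_coord (d : ℕ) (hd : 0 < d) :
    ∫ z in Aset d, z ⟨0, hd⟩ ∂volume
      = (((Real.sqrt 2)⁻¹) ^ 2 / 2) * ((Real.sqrt (2 * ((d : ℝ) - 1)))⁻¹) ^ (d - 1) := by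
  classical
  obtain ⟨n, rfl⟩ : ∃ n, d = n + 1 := ⟨d - 1, (Nat.succ_pred_eq_of_pos hd).symm⟩
  set a : ℝ := (Real.sqrt 2)⁻¹ with ha
  set b : ℝ := (Real.sqrt (2 * (((n+1:ℕ):ℝ) - 1)))⁻¹ with hb
  have hbn : 0 ≤ b := by positivity
  have han : 0 ≤ a := by positivity
  set F : Fin (n+1) → ℝ → ℝ := fun i t =>
    if (i : ℕ) = 0 then Set.indicator (Set.Icc 0 a) id t
    else Set.indicator (Set.Icc 0 b) 1 t with hF
  have hind : Set.indicator (Aset (n+1)) (fun z => z ⟨0, hd⟩)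
      = fun z => ∏ i, F i (z i) := by
    funext z
    by_cases hz : z ∈ Aset (n+1)
    · rw [Set.indicator_of_mem hz]
      rw [Fintype.prod_eq_single (⟨0, hd⟩ : Fin (n+1)) (fun j hj => ?_)]
      · have hz0 := hz ⟨0, hd⟩ (Set.mem_univ _)
        simp only [hF, if_pos rfl]
        rw [Set.indicator_of_mem]
        · rfl
        · simpa [ha] using hz0
      · have hj0 : (j : ℕ) ≠ 0 := by
          intro h
          exact hj (Fin.ext h)
        have hzj := hz j (Set.mem_univ _)
        simp only [hF, if_neg hj0]
        rw [Set.indicator_of_mem]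
        · rfl
        · simpa [hb, if_neg hj0, show j ≠ 0 from fun h => hj0 (by simp [h])] using hzj
    · rw [Set.indicator_of_notMem hz]
      rw [Aset, Set.mem_univ_pi] at hz
      push_neg at hz
      obtain ⟨i, hi⟩ := hz
      refine (Finset.prod_eq_zero (Finset.mem_univ i) ?_).symm
      by_cases hi0 : (i : ℕ) = 0
      · simp only [hF, if_pos hi0]
        rw [Set.indicator_of_notMem]
        simpa [ha, hi0] using hi
      · simp only [hF, if_neg hi0]
        rw [Set.indicator_of_notMem]
        simpa [hb, hi0, show i ≠ 0 from fun h => hi0 (by simp [h])] using hi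
  rw [← MeasureTheory.integral_indicator (Aset_meas (n+1)), hind, volume_pi,
    MeasureTheory.integral_fintype_prod_eq_prod F]
  rw [Fin.prod_univ_succ]
  have h0 : F 0 = Set.indicator (Set.Icc 0 a) id := by
    funext t; simp [hF]
  have hs : ∀ i : Fin n, F i.succ = Set.indicator (Set.Icc 0 b) 1 := by
    intro i; funext t; simp [hF, Fin.val_succ]
  rw [h0]
  simp_rw [hs]
  rw [Finset.prod_const, Finset.card_univ, Fintype.card_fin]
  have e1 : ∫ t, Set.indicator (Set.Icc 0 a) id t = a ^ 2 / 2 := by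
    rw [MeasureTheory.integral_indicator measurableSet_Icc]
    exact integral_Icc_id han
  have e2 : (∫ t, Set.indicator (Set.Icc 0 b) (1 : ℝ → ℝ) t) = b := by
    rw [MeasureTheory.integral_indicator measurableSet_Icc]
    simp [Real.volume_Icc, hbn]
  rw [e1, e2]
  norm_num

end AUX

section MAIN

variable {d : ℕ}

lemma exp_gt_one {ζ : ℝ} (hζ : 0 < ζ) : (1:ℝ) < Real.exp ζ := by
  rw [← Real.exp_zero]; exact Real.exp_lt_exp.2 hζ

lemma fdens_nonneg {ζ : ℝ} (hζ : 0 ≤ ζ) (y : ℝ) : 0 ≤ fdens ζ y := by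
  rw [fdens]
  split_ifs with h1 h2
  · norm_num
  · have hp : 0 < ζ := lt_of_le_of_ne hζ (Ne.symm h2)
    have he : 0 < Real.exp ζ - 1 := by have := exp_gt_one hp; linarith
    positivity
  · exact le_refl 0

lemma fdens_le_exp2 {ζ : ℝ} (h0 : 0 ≤ ζ) (h2 : ζ ≤ 2) (y : ℝ) : fdens ζ y ≤ Real.exp 2 := by
  rw [fdens]
  split_ifs with h1 hz
  · calc (1:ℝ) = Real.exp 0 := Real.exp_zero.symm
    _ ≤ Real.exp 2 := Real.exp_le_exp.2 (by norm_num)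
  · have hζpos : 0 < ζ := lt_of_le_of_ne h0 (Ne.symm hz)
    have he : ζ ≤ Real.exp ζ - 1 := by have := Real.add_one_le_exp ζ; linarith
    have hepos : 0 < Real.exp ζ - 1 := lt_of_lt_of_le hζpos he
    have hy : ζ * y ≤ 2 := by
      calc ζ * y ≤ ζ * 1 := mul_le_mul_of_nonneg_left h1.2 h0
      _ = ζ := mul_one ζ
      _ ≤ 2 := h2
    have hey : Real.exp (ζ * y) ≤ Real.exp 2 := Real.exp_le_exp.2 hy
    rw [div_le_iff₀ hepos]
    nlinarith [Real.exp_pos (ζ * y)]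
  · positivity

lemma fdens_meas (ζ : ℝ) : Measurable (fdens ζ) := by
  unfold fdens
  by_cases h : ζ = 0
  · simp only [h, if_true]
    exact Measurable.ite measurableSet_Icc measurable_const measurable_const
  · simp only [h, if_false]
    exact Measurable.ite measurableSet_Icc
      (((measurable_id.const_mul ζ).exp.const_mul ζ).div_const _) measurable_const

/-- density ratio on the base space -/
noncomputable def gZ (d : ℕ) (hd : 0 < d) (ζ : ℝ) : (Fin d → ℝ) → ℝ≥0∞ := fun z =>
  ENNReal.ofReal ((Real.exp ζ - 1)/ζ * Real.exp (-(ζ * (Real.sqrt 2 * z ⟨0, hd⟩))))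

/-- density ratio on the option space -/
noncomputable def gO (d : ℕ) (hd : 0 < d) (ζ : ℝ) : Option (Fin d → ℝ) → ℝ≥0∞ := fun x =>
  x.elim 1 (gZ d hd ζ)

/-- log-likelihood ratio on the option space -/
noncomputable def LO (d : ℕ) (hd : 0 < d) (ζ : ℝ) : Option (Fin d → ℝ) → ℝ := fun x =>
  x.elim 0 (fun z => Real.log ((Real.exp ζ - 1)/ζ) - ζ * (Real.sqrt 2 * z ⟨0, hd⟩))

lemma gZ_meas (hd : 0 < d) (ζ : ℝ) : Measurable (gZ d hd ζ) := by
  apply Measurable.ennreal_ofReal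
  exact ((((measurable_pi_apply _).const_mul _).const_mul _).neg.exp.const_mul _)

lemma gO_meas (hd : 0 < d) (ζ : ℝ) : Measurable (gO d hd ζ) :=
  measurable_option_elim (gZ_meas hd ζ) 1

lemma gO_ne_top (hd : 0 < d) (ζ : ℝ) : ∀ x, gO d hd ζ x ≠ ⊤ := by
  rintro (_ | z)
  · simp [gO]
  · simp [gO, gZ]

lemma LO_meas (hd : 0 < d) (ζ : ℝ) : Measurable (LO d hd ζ) :=
  measurable_option_elim
    (measurable_const.sub (((measurable_pi_apply _).const_mul _).const_mul _)) 0

lemma log_gO_eq (hd : 0 < d) {ζ : ℝ} (hζ : 0 < ζ) (x : Option (Fin d → ℝ)) :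
    Real.log ((gO d hd ζ x).toReal) = LO d hd ζ x := by
  have hc : 0 < (Real.exp ζ - 1)/ζ := by
    have := exp_gt_one hζ
    apply div_pos (by linarith) hζ
  cases x with
  | none => simp [gO, LO]
  | some z =>
      simp only [gO, gZ, LO, Option.elim]
      rw [ENNReal.toReal_ofReal (by positivity),
        Real.log_mul (ne_of_gt hc) (Real.exp_ne_zero _), Real.log_exp]
      ring

lemma gO_toReal_pos (hd : 0 < d) {ζ : ℝ} (hζ : 0 < ζ) (x : Option (Fin d → ℝ)) :
    0 < (gO d hd ζ x).toReal := by
  have hc : 0 < (Real.exp ζ - 1)/ζ := by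
    have := exp_gt_one hζ
    apply div_pos (by linarith) hζ
  cases x with
  | none => simp [gO]
  | some z =>
      simp only [gO, gZ, Option.elim]
      rw [ENNReal.toReal_ofReal (by positivity)]
      positivity

lemma Qone_zero_eq (hd : 0 < d) (ζ : ℝ) :
    Qone d hd ζ 0 = ENNReal.ofReal (Cd d) • volume.restrict (Aset d) := by
  rw [Qone, ← withDensity_const]
  apply withDensity_congr_ae
  filter_upwards [self_mem_ae_restrict (Aset_meas d) (α := Fin d → ℝ)] with z hz
  have h1 := sqrt2_mul_mem (mem_Aset_bound hd hz)
  rw [zero_mul, fdens, if_pos h1, if_pos rfl, mul_one]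

lemma Qone_abs (hd : 0 < d) {ζ : ℝ} (hζ : 0 < ζ) :
    Qone d hd ζ 0 = (Qone d hd ζ 1).withDensity (gZ d hd ζ) := by
  have hf : Measurable fun z : Fin d → ℝ =>
      ENNReal.ofReal (Cd d * fdens (1 * ζ) (Real.sqrt 2 * z ⟨0, hd⟩)) := by
    apply Measurable.ennreal_ofReal
    exact ((fdens_meas _).comp ((measurable_pi_apply _).const_mul _)).const_mul (Cd d)
  rw [Qone, Qone, ← withDensity_mul _ hf (gZ_meas hd ζ)]
  apply withDensity_congr_ae
  filter_upwards [self_mem_ae_restrict (Aset_meas d) (α := Fin d → ℝ)] with z hz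
  have h1 := sqrt2_mul_mem (mem_Aset_bound hd hz)
  have hζ' : ζ ≠ 0 := ne_of_gt hζ
  have he : Real.exp ζ - 1 ≠ 0 := by have := exp_gt_one hζ; linarith
  have he' : 0 < Real.exp ζ - 1 := by have := exp_gt_one hζ; linarith
  simp only [Pi.mul_apply, gZ]
  rw [zero_mul, one_mul, fdens, fdens, if_pos h1, if_pos h1, if_pos rfl, if_neg hζ',
    ← ENNReal.ofReal_mul (by
      have h2 := Cd_nonneg d
      have hf : 0 ≤ ζ * Real.exp (ζ * (Real.sqrt 2 * z ⟨0, hd⟩)) / (Real.exp ζ - 1) := by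
        positivity
      positivity)]
  congr 1
  rw [Real.exp_neg]
  field_simp

lemma Pone_abs (hd : 0 < d) {ζ : ℝ} (hζ : 0 < ζ) (w₁ : ℝ) :
    Pone d hd ζ w₁ 0 = (Pone d hd ζ w₁ 1).withDensity (gO d hd ζ) := by
  rw [Pone, Pone, withDensity_add_measure, withDensity_smul_measure,
    withDensity_smul_measure, withDensity_map' _ measurable_some' (gO_meas hd ζ),
    withDensity_dirac' _ (gO_meas hd ζ)]
  have h1 : (gO d hd ζ) ∘ Option.some = gZ d hd ζ := by funext z; rfl
  have h2 : gO d hd ζ none = 1 := rfl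
  rw [h1, h2, one_smul, ← Qone_abs hd hζ]

lemma Qone_fin (hd : 0 < d) {ζ τ : ℝ} (h0 : 0 ≤ τ * ζ) (h2 : τ * ζ ≤ 2) :
    IsFiniteMeasure (Qone d hd ζ τ) := by
  constructor
  rw [Qone, withDensity_apply _ MeasurableSet.univ, Measure.restrict_univ]
  calc ∫⁻ z in Aset d, ENNReal.ofReal (Cd d * fdens (τ * ζ) (Real.sqrt 2 * z ⟨0, hd⟩)) ∂volume
      ≤ ∫⁻ _ in Aset d, ENNReal.ofReal (Cd d * Real.exp 2) ∂volume := by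
        apply lintegral_mono_ae
        filter_upwards with z
        apply ENNReal.ofReal_le_ofReal
        exact mul_le_mul_of_nonneg_left (fdens_le_exp2 h0 h2 _) (Cd_nonneg d)
    _ = ENNReal.ofReal (Cd d * Real.exp 2) * volume (Aset d) := by
        rw [setLIntegral_const]
    _ < ⊤ := by
        rw [volume_Aset d hd]
        exact ENNReal.mul_lt_top ENNReal.ofReal_lt_top ENNReal.ofReal_lt_top

lemma Pone_fin (hd : 0 < d) {ζ τ : ℝ} (h0 : 0 ≤ τ * ζ) (h2 : τ * ζ ≤ 2) (w₁ : ℝ) :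
    IsFiniteMeasure (Pone d hd ζ w₁ τ) := by
  haveI := Qone_fin hd h0 h2
  haveI : IsFiniteMeasure ((Qone d hd ζ τ).map Option.some) :=
    Measure.isFiniteMeasure_map _ _
  rw [Pone]
  constructor
  rw [Measure.add_apply, Measure.smul_apply, Measure.smul_apply]
  exact ENNReal.add_lt_top.2 ⟨ENNReal.mul_lt_top ENNReal.ofReal_lt_top (measure_lt_top _ _),
    ENNReal.mul_lt_top ENNReal.ofReal_lt_top (measure_lt_top _ _)⟩

lemma vol_Aset_toReal_pos (hd : 0 < d) :
    0 < (Real.sqrt 2)⁻¹ * ((Real.sqrt (2 * ((d : ℝ) - 1)))⁻¹) ^ (d - 1) := by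
  have h := Cd_mul_vol d hd
  have hnn : 0 ≤ (Real.sqrt 2)⁻¹ * ((Real.sqrt (2 * ((d : ℝ) - 1)))⁻¹) ^ (d - 1) := by
    positivity
  rcases lt_or_eq_of_le hnn with h1 | h1
  · exact h1
  · rw [← h1] at h; simp at h

lemma Qone_zero_univ (hd : 0 < d) (ζ : ℝ) : Qone d hd ζ 0 Set.univ = 1 := by
  rw [Qone_zero_eq hd ζ, Measure.smul_apply, Measure.restrict_apply_univ, smul_eq_mul,
    volume_Aset d hd, ← ENNReal.ofReal_mul (Cd_nonneg d), Cd_mul_vol d hd,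
    ENNReal.ofReal_one]

lemma Pone_zero_prob (hd : 0 < d) (ζ : ℝ) {w₁ : ℝ} (hw0 : 0 ≤ w₁) (hw1 : w₁ ≤ 1) :
    IsProbabilityMeasure (Pone d hd ζ w₁ 0) := by
  constructor
  rw [Pone, Measure.add_apply, Measure.smul_apply, Measure.smul_apply,
    Measure.map_apply measurable_some' MeasurableSet.univ]
  simp only [Set.preimage_univ]
  rw [Qone_zero_univ hd ζ, Measure.dirac_apply' _ MeasurableSet.univ]
  simp only [Set.indicator_univ, smul_eq_mul, mul_one, Pi.one_apply]
  rw [← ENNReal.ofReal_add (by linarith) hw0]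
  norm_num

lemma Pzero_prob (hd : 0 < d) : IsProbabilityMeasure (Pzero d) := by
  constructor
  rw [Pzero, Measure.smul_apply, Measure.restrict_apply_univ, smul_eq_mul, volume_Aset d hd]
  apply ENNReal.inv_mul_cancel
  · rw [ne_eq, ENNReal.ofReal_eq_zero, not_le]
    exact vol_Aset_toReal_pos hd
  · exact ENNReal.ofReal_ne_top

lemma LOsome_intOn (hd : 0 < d) {ζ : ℝ} (hζ : 0 < ζ) (hζ2 : ζ ≤ 2) :
    IntegrableOn (fun z : Fin d → ℝ =>
      Real.log ((Real.exp ζ - 1)/ζ) - ζ * (Real.sqrt 2 * z ⟨0, hd⟩)) (Aset d) volume := by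
  apply Measure.integrableOn_of_bounded (M := |Real.log ((Real.exp ζ - 1)/ζ)| + 2)
  · rw [volume_Aset d hd]; exact ENNReal.ofReal_ne_top
  · exact (measurable_const.sub
      (((measurable_pi_apply _).const_mul _).const_mul _)).aestronglyMeasurable
  · filter_upwards [self_mem_ae_restrict (Aset_meas d) (α := Fin d → ℝ)] with z hz
    have h1 := sqrt2_mul_mem (mem_Aset_bound hd hz)
    have h2 : 0 ≤ ζ * (Real.sqrt 2 * z ⟨0, hd⟩) := mul_nonneg hζ.le h1.1
    have h3 : ζ * (Real.sqrt 2 * z ⟨0, hd⟩) ≤ 2 := by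
      calc ζ * (Real.sqrt 2 * z ⟨0, hd⟩) ≤ ζ * 1 := mul_le_mul_of_nonneg_left h1.2 hζ.le
      _ ≤ 2 := by linarith
    rw [Real.norm_eq_abs]
    calc |Real.log ((Real.exp ζ - 1)/ζ) - ζ * (Real.sqrt 2 * z ⟨0, hd⟩)|
        ≤ |Real.log ((Real.exp ζ - 1)/ζ)| + |ζ * (Real.sqrt 2 * z ⟨0, hd⟩)| := abs_sub _ _
      _ ≤ |Real.log ((Real.exp ζ - 1)/ζ)| + 2 := by
          rw [abs_of_nonneg h2]; linarith

lemma coord_intOn (hd : 0 < d) :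
    IntegrableOn (fun z : Fin d → ℝ => z ⟨0, hd⟩) (Aset d) volume := by
  apply Measure.integrableOn_of_bounded (M := (Real.sqrt 2)⁻¹)
  · rw [volume_Aset d hd]; exact ENNReal.ofReal_ne_top
  · exact (measurable_pi_apply _).aestronglyMeasurable
  · filter_upwards [self_mem_ae_restrict (Aset_meas d) (α := Fin d → ℝ)] with z hz
    have h1 := mem_Aset_bound hd hz
    rw [Real.norm_eq_abs, abs_of_nonneg h1.1]
    exact h1.2

lemma LO_int (hd : 0 < d) {ζ : ℝ} (hζ : 0 < ζ) (hζ2 : ζ ≤ 2) (w₁ : ℝ) :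
    Integrable (LO d hd ζ) (Pone d hd ζ w₁ 0) := by
  rw [Pone]
  apply Integrable.add_measure
  · apply Integrable.smul_measure _ ENNReal.ofReal_ne_top
    rw [integrable_map_measure
      ((LO_meas hd ζ).stronglyMeasurable.aestronglyMeasurable)
      measurable_some'.aemeasurable]
    have h : (LO d hd ζ) ∘ Option.some = fun z : Fin d → ℝ =>
        Real.log ((Real.exp ζ - 1)/ζ) - ζ * (Real.sqrt 2 * z ⟨0, hd⟩) := by
      funext z; rfl
    rw [h, Qone_zero_eq hd ζ]
    exact (LOsome_intOn hd hζ hζ2).smul_measure ENNReal.ofReal_ne_top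
  · apply Integrable.smul_measure _ ENNReal.ofReal_ne_top
    refine ⟨(LO_meas hd ζ).stronglyMeasurable.aestronglyMeasurable, ?_⟩
    show (∫⁻ x, ‖LO d hd ζ x‖₊ ∂Measure.dirac none) < ⊤
    rw [lintegral_dirac' _ ((LO_meas hd ζ).nnnorm.coe_nnreal_ennreal)]
    exact ENNReal.coe_lt_top

lemma LO_integral (hd : 0 < d) {ζ : ℝ} (hζ : 0 < ζ) (hζ2 : ζ ≤ 2) {w₁ : ℝ} (hw0 : 0 ≤ w₁)
    (hw1 : w₁ ≤ 1) :
    ∫ x, LO d hd ζ x ∂(Pone d hd ζ w₁ 0)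
      = (1 - w₁) * (Real.log ((Real.exp ζ - 1)/ζ) - ζ/2) := by
  rw [Pone]
  have hsm := (LO_meas hd ζ).stronglyMeasurable
  rw [integral_add_measure
    (by
      apply Integrable.smul_measure _ ENNReal.ofReal_ne_top
      rw [integrable_map_measure hsm.aestronglyMeasurable measurable_some'.aemeasurable]
      have h : (LO d hd ζ) ∘ Option.some = fun z : Fin d → ℝ =>
          Real.log ((Real.exp ζ - 1)/ζ) - ζ * (Real.sqrt 2 * z ⟨0, hd⟩) := by
        funext z; rfl
      rw [h, Qone_zero_eq hd ζ]
      exact (LOsome_intOn hd hζ hζ2).smul_measure ENNReal.ofReal_ne_top)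
    (by
      apply Integrable.smul_measure _ ENNReal.ofReal_ne_top
      refine ⟨hsm.aestronglyMeasurable, ?_⟩
      show (∫⁻ x, ‖LO d hd ζ x‖₊ ∂Measure.dirac none) < ⊤
      rw [lintegral_dirac' _ ((LO_meas hd ζ).nnnorm.coe_nnreal_ennreal)]
      exact ENNReal.coe_lt_top)]
  rw [integral_smul_measure, integral_smul_measure, integral_dirac' _ _ hsm]
  have hLnone : LO d hd ζ none = 0 := rfl
  rw [hLnone]
  rw [integral_map measurable_some'.aemeasurable hsm.aestronglyMeasurable]
  have hcomp : ∀ z : Fin d → ℝ, LO d hd ζ (Option.some z)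
      = Real.log ((Real.exp ζ - 1)/ζ) - ζ * (Real.sqrt 2 * z ⟨0, hd⟩) := fun z => rfl
  simp_rw [hcomp]
  rw [Qone_zero_eq hd ζ, integral_smul_measure]
  rw [ENNReal.toReal_ofReal (Cd_nonneg d), ENNReal.toReal_ofReal (by linarith : (0:ℝ) ≤ 1 - w₁),
    ENNReal.toReal_ofReal hw0]
  rw [integral_sub (integrableOn_const (by
      rw [volume_Aset d hd]; exact ENNReal.ofReal_ne_top) :
      IntegrableOn (fun _ : Fin d → ℝ => Real.log ((Real.exp ζ - 1)/ζ)) (Aset d) volume)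
    (by
      have h : (fun z : Fin d → ℝ => ζ * (Real.sqrt 2 * z ⟨0, hd⟩))
          = fun z : Fin d → ℝ => (ζ * Real.sqrt 2) * z ⟨0, hd⟩ := by
        funext z; ring
      rw [h]
      exact (coord_intOn hd).const_mul _)]
  rw [setIntegral_const]
  have h : (fun z : Fin d → ℝ => ζ * (Real.sqrt 2 * z ⟨0, hd⟩))
      = fun z : Fin d → ℝ => (ζ * Real.sqrt 2) * z ⟨0, hd⟩ := by
    funext z; ring
  rw [h, integral_const_mul, integral_Aset_coord d hd, measureReal_def, volume_Aset d hd,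
    ENNReal.toReal_ofReal (vol_Aset_toReal_pos hd).le]
  rw [smul_zero, add_zero, smul_eq_mul, smul_eq_mul, smul_eq_mul]
  have hKV : Cd d * ((Real.sqrt 2)⁻¹ * ((Real.sqrt (2 * ((d : ℝ) - 1)))⁻¹) ^ (d - 1)) = 1 :=
    Cd_mul_vol d hd
  have hs0 : 0 < Real.sqrt 2 := Real.sqrt_pos.2 (by norm_num)
  have hss : Real.sqrt 2 * (Real.sqrt 2)⁻¹ = 1 := mul_inv_cancel₀ hs0.ne'
  set B : ℝ := ((Real.sqrt (2 * ((d : ℝ) - 1)))⁻¹) ^ (d - 1) with hB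
  set C : ℝ := Real.log ((Real.exp ζ - 1)/ζ) with hC
  have hKB : Cd d * B = Real.sqrt 2 := by
    have h2 : Real.sqrt 2 * (Cd d * ((Real.sqrt 2)⁻¹ * B)) = Real.sqrt 2 * 1 := by rw [hKV]
    rw [show Real.sqrt 2 * (Cd d * ((Real.sqrt 2)⁻¹ * B))
      = (Real.sqrt 2 * (Real.sqrt 2)⁻¹) * (Cd d * B) by ring, hss, one_mul, mul_one] at h2
    exact h2
  have hinv2 : ((Real.sqrt 2)⁻¹ : ℝ) ^ 2 = 2⁻¹ := by
    rw [inv_pow, Real.sq_sqrt (by norm_num : (0:ℝ) ≤ 2)]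
  have e1 : Cd d * ((Real.sqrt 2)⁻¹ * B * C
      - ζ * Real.sqrt 2 * ((Real.sqrt 2)⁻¹ ^ 2 / 2 * B)) = C - ζ / 2 := by
    have t1 : Cd d * ((Real.sqrt 2)⁻¹ * B) * C = C := by rw [hKV, one_mul]
    have t2 : Cd d * (ζ * Real.sqrt 2 * ((Real.sqrt 2)⁻¹ ^ 2 / 2 * B)) = ζ / 2 := by
      rw [hinv2]
      calc Cd d * (ζ * Real.sqrt 2 * (2⁻¹ / 2 * B))
          = ζ * Real.sqrt 2 * (2⁻¹ / 2) * (Cd d * B) := by ring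
        _ = ζ * Real.sqrt 2 * (2⁻¹ / 2) * Real.sqrt 2 := by rw [hKB]
        _ = ζ * (Real.sqrt 2 * Real.sqrt 2) * (2⁻¹ / 2) := by ring
        _ = ζ / 2 := by
            rw [Real.mul_self_sqrt (by norm_num : (0:ℝ) ≤ 2)]; ring
    calc Cd d * ((Real.sqrt 2)⁻¹ * B * C
        - ζ * Real.sqrt 2 * ((Real.sqrt 2)⁻¹ ^ 2 / 2 * B))
        = Cd d * ((Real.sqrt 2)⁻¹ * B) * C
          - Cd d * (ζ * Real.sqrt 2 * ((Real.sqrt 2)⁻¹ ^ 2 / 2 * B)) := by ring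
      _ = C - ζ / 2 := by rw [t1, t2]
  rw [e1]

end MAIN

/-- **KL bound between the product measures of the lower-bound construction
(Lemma A.12):** for `ζ ∈ [0,2]`, `n₁ ∈ ℕ`, `w₁ ∈ [0,1]`,
`KL(P̄_{n₀,n₁}(ζ,w₁,0), P̄_{n₀,n₁}(ζ,w₁,1)) ≤ n₁(1−w₁)ζ²/20`. -/
theorem kl_product_measure_bound (d : ℕ) (hd : 0 < d) (n₀ n₁ : ℕ)
    (ζ : ℝ) (hζ : ζ ∈ Set.Icc (0 : ℝ) 2) (w₁ : ℝ) (hw₁ : w₁ ∈ Set.Icc (0 : ℝ) 1) :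
    klDivR (Pbar d hd n₀ n₁ ζ w₁ 0) (Pbar d hd n₀ n₁ ζ w₁ 1)
      ≤ (n₁ : ℝ) * (1 - w₁) * ζ ^ 2 / 20 := by
  obtain ⟨hζ0, hζ2⟩ := hζ
  obtain ⟨hw0, hw1⟩ := hw₁
  haveI hPzp : IsProbabilityMeasure (Pzero d) := Pzero_prob hd
  haveI hPzmp : IsProbabilityMeasure ((Pzero d).map Option.some) :=
    Measure.isProbabilityMeasure_map measurable_some'.aemeasurable
  haveI hP1f : IsFiniteMeasure (Pone d hd ζ w₁ 1) :=
    Pone_fin hd (by rw [one_mul]; exact hζ0) (by rw [one_mul]; exact hζ2) w₁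
  haveI hP0p : IsProbabilityMeasure (Pone d hd ζ w₁ 0) := Pone_zero_prob hd ζ hw0 hw1
  have hRHS : 0 ≤ (n₁ : ℝ) * (1 - w₁) * ζ ^ 2 / 20 := by
    apply div_nonneg _ (by norm_num)
    apply mul_nonneg (mul_nonneg (Nat.cast_nonneg n₁) (by linarith)) (sq_nonneg ζ)
  rcases eq_or_lt_of_le hζ0 with hz | hζpos
  · -- ζ = 0 : the two measures coincide
    subst hz
    have hPP : Pbar d hd n₀ n₁ 0 w₁ 0 = Pbar d hd n₀ n₁ 0 w₁ 1 := by
      simp [Pbar, Pone, Qone]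
    rw [hPP, klDivR]
    haveI : SigmaFinite (Pbar d hd n₀ n₁ 0 w₁ 1) := by rw [Pbar]; infer_instance
    have h := Measure.rnDeriv_self (Pbar d hd n₀ n₁ 0 w₁ 1)
    have hcong : (fun x => Real.log
          (((Pbar d hd n₀ n₁ 0 w₁ 1).rnDeriv (Pbar d hd n₀ n₁ 0 w₁ 1) x).toReal))
        =ᵐ[Pbar d hd n₀ n₁ 0 w₁ 1] (fun _ => (0:ℝ)) := by
      filter_upwards [h] with x hx
      rw [hx]
      simp
    rw [integral_congr_ae hcong, integral_zero]
    simpa using hRHS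
  · -- main case ζ > 0
    have hHmeas : Measurable fun y : Fin n₁ → Option (Fin d → ℝ) => ∏ i, gO d hd ζ (y i) :=
      Finset.measurable_prod _ (fun i _ => (gO_meas hd ζ).comp (measurable_pi_apply i))
    have hHnt : ∀ y : Fin n₁ → Option (Fin d → ℝ), (∏ i, gO d hd ζ (y i)) ≠ ⊤ :=
      fun y => ENNReal.prod_ne_top (fun i _ => gO_ne_top hd ζ (y i))
    have habs : Pbar d hd n₀ n₁ ζ w₁ 0
        = (Pbar d hd n₀ n₁ ζ w₁ 1).withDensity (fun p => ∏ i, gO d hd ζ (p.2 i)) := by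
      rw [Pbar, Pbar, Pone_abs hd hζpos w₁,
        pi_withDensity' n₁ (Pone d hd ζ w₁ 1) (gO_meas hd ζ) (gO_ne_top hd ζ)]
      have h2 := prod_withDensity' (Measure.pi fun _ : Fin n₀ => (Pzero d).map Option.some)
        (Measure.pi fun _ : Fin n₁ => Pone d hd ζ w₁ 1)
        (f := fun _ => (1:ℝ≥0∞)) measurable_const hHmeas
        (fun _ => ENNReal.one_ne_top) hHnt
      rw [withDensity_const, one_smul] at h2
      simp only [one_mul] at h2
      exact h2
    haveI hSF : SigmaFinite (Pbar d hd n₀ n₁ ζ w₁ 1) := by rw [Pbar]; infer_instance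
    have hG : Measurable fun p : (Fin n₀ → Option (Fin d → ℝ))
        × (Fin n₁ → Option (Fin d → ℝ)) => ∏ i, gO d hd ζ (p.2 i) :=
      hHmeas.comp measurable_snd
    have hrn : (Pbar d hd n₀ n₁ ζ w₁ 0).rnDeriv (Pbar d hd n₀ n₁ ζ w₁ 1)
        =ᵐ[Pbar d hd n₀ n₁ ζ w₁ 1] (fun p => ∏ i, gO d hd ζ (p.2 i)) := by
      have h5 := Measure.rnDeriv_withDensity (Pbar d hd n₀ n₁ ζ w₁ 1) hG
      rw [← habs] at h5
      exact h5
    have hac : Pbar d hd n₀ n₁ ζ w₁ 0 ≪ Pbar d hd n₀ n₁ ζ w₁ 1 := by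
      rw [habs]; exact withDensity_absolutelyContinuous _ _
    have hrn0 : (Pbar d hd n₀ n₁ ζ w₁ 0).rnDeriv (Pbar d hd n₀ n₁ ζ w₁ 1)
        =ᵐ[Pbar d hd n₀ n₁ ζ w₁ 0] (fun p => ∏ i, gO d hd ζ (p.2 i)) :=
      hrn.filter_mono hac.ae_le
    have hint_eq : ∫ x, Real.log
          (((Pbar d hd n₀ n₁ ζ w₁ 0).rnDeriv (Pbar d hd n₀ n₁ ζ w₁ 1) x).toReal)
          ∂(Pbar d hd n₀ n₁ ζ w₁ 0)
        = ∫ x, Real.log ((∏ i, gO d hd ζ (x.2 i)).toReal) ∂(Pbar d hd n₀ n₁ ζ w₁ 0) := by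
      apply integral_congr_ae
      filter_upwards [hrn0] with x hx
      rw [hx]
    rw [klDivR, hint_eq]
    have hptwise : ∀ y : Fin n₁ → Option (Fin d → ℝ),
        Real.log ((∏ i, gO d hd ζ (y i)).toReal) = ∑ i, LO d hd ζ (y i) := by
      intro y
      rw [ENNReal.toReal_prod, Real.log_prod
        (fun i _ => (gO_toReal_pos hd hζpos (y i)).ne')]
      exact Finset.sum_congr rfl (fun i _ => log_gO_eq hd hζpos _)
    simp_rw [hptwise]
    rw [Pbar]
    have hFz : StronglyMeasurable fun y : Fin n₁ → Option (Fin d → ℝ) =>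
        ∑ i, LO d hd ζ (y i) :=
      (Finset.measurable_sum _ (fun i _ =>
        (LO_meas hd ζ).comp (measurable_pi_apply i))).stronglyMeasurable
    have hmap : ∫ p : (Fin n₀ → Option (Fin d → ℝ)) × (Fin n₁ → Option (Fin d → ℝ)),
          (∑ i, LO d hd ζ (p.2 i))
          ∂((Measure.pi fun _ : Fin n₀ => (Pzero d).map Option.some).prod
            (Measure.pi fun _ : Fin n₁ => Pone d hd ζ w₁ 0))
        = ∫ y, (∑ i, LO d hd ζ (y i)) ∂(Measure.pi fun _ : Fin n₁ => Pone d hd ζ w₁ 0) := by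
      have h3 := integral_map (φ := (Prod.snd : (Fin n₀ → Option (Fin d → ℝ))
          × (Fin n₁ → Option (Fin d → ℝ)) → (Fin n₁ → Option (Fin d → ℝ))))
        (μ := (Measure.pi fun _ : Fin n₀ => (Pzero d).map Option.some).prod
          (Measure.pi fun _ : Fin n₁ => Pone d hd ζ w₁ 0))
        measurable_snd.aemeasurable
        (f := fun y => ∑ i, LO d hd ζ (y i)) hFz.aestronglyMeasurable
      rw [Measure.map_snd_prod, measure_univ, one_smul] at h3
      exact h3.symm
    rw [hmap]
    have hInt : Integrable (LO d hd ζ) (Pone d hd ζ w₁ 0) := LO_int hd hζpos hζ2 w₁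
    have hveq : ∀ i : Fin n₁,
        (Measure.pi fun _ : Fin n₁ => Pone d hd ζ w₁ 0).map (fun y => y i)
          = Pone d hd ζ w₁ 0 := fun i => pi_map_eval' _ i
    have hInti : ∀ i : Fin n₁, Integrable
        (fun y : Fin n₁ → Option (Fin d → ℝ) => LO d hd ζ (y i))
        (Measure.pi fun _ : Fin n₁ => Pone d hd ζ w₁ 0) := by
      intro i
      have h4 : Integrable (LO d hd ζ)
          ((Measure.pi fun _ : Fin n₁ => Pone d hd ζ w₁ 0).map (fun y => y i)) := by
        rw [hveq i]; exact hInt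
      exact (integrable_map_measure
        ((LO_meas hd ζ).stronglyMeasurable.aestronglyMeasurable)
        (measurable_pi_apply i).aemeasurable).1 h4
    rw [integral_finset_sum _ (fun i _ => hInti i)]
    have hval : ∀ i : Fin n₁, ∫ y, LO d hd ζ (y i)
          ∂(Measure.pi fun _ : Fin n₁ => Pone d hd ζ w₁ 0)
        = ∫ x, LO d hd ζ x ∂(Pone d hd ζ w₁ 0) := by
      intro i
      calc ∫ y, LO d hd ζ (y i) ∂(Measure.pi fun _ : Fin n₁ => Pone d hd ζ w₁ 0)
          = ∫ x, LO d hd ζ x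
              ∂((Measure.pi fun _ : Fin n₁ => Pone d hd ζ w₁ 0).map (fun y => y i)) :=
            (integral_map (measurable_pi_apply i).aemeasurable
              ((LO_meas hd ζ).stronglyMeasurable.aestronglyMeasurable)).symm
        _ = ∫ x, LO d hd ζ x ∂(Pone d hd ζ w₁ 0) := by rw [hveq i]
    simp_rw [hval]
    rw [Finset.sum_const, Finset.card_univ, Fintype.card_fin, nsmul_eq_mul,
      LO_integral hd hζpos hζ2 hw0 hw1]
    have hsc := scalar_ineq hζpos hζ2
    have h1w : (0:ℝ) ≤ 1 - w₁ := by linarith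
    calc (n₁:ℝ) * ((1-w₁) * (Real.log ((Real.exp ζ - 1)/ζ) - ζ/2))
        ≤ (n₁:ℝ) * ((1-w₁) * (ζ^2/20)) := by
          apply mul_le_mul_of_nonneg_left _ (Nat.cast_nonneg n₁)
          exact mul_le_mul_of_nonneg_left hsc h1w
      _ = (n₁:ℝ) * (1-w₁) * ζ^2/20 := by ring
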